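/- For any tree T on d ≥ 4 nodes, the size of its equivalence class [T] equals the product over i of (1 + ℓ_i), where ℓ_1,...,ℓ_κ are the sizes of the groups of leaves sharing a common neighbor. -/

import Mathlib

/-- A leaf of a graph: a vertex with a unique neighbor. -/
def IsLeaf {d : ℕ} (G : SimpleGraph (Fin d)) (v : Fin d) : Prop :=
  ∃! w, G.Adj v w

/-- A permutation that swaps a set of leaves (no two of which can share a
common neighbor, since the swap is a function) with their unique neighbors,
fixing everything else. -/
def IsLeafSwapPerm {d : ℕ} (G : SimpleGraph (Fin d)) (e : Equiv.Perm (Fin d)) : Prop :=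
  (∀ v, e (e v) = v) ∧
  ∀ v, e v ≠ v → (IsLeaf G v ∧ G.Adj v (e v)) ∨ (IsLeaf G (e v) ∧ G.Adj v (e v))

/-- The graph obtained by relabeling `G` along a permutation. -/
def relabel {d : ℕ} (G : SimpleGraph (Fin d)) (e : Equiv.Perm (Fin d)) :
    SimpleGraph (Fin d) :=
  G.map e.toEmbedding

/-- The equivalence class `[T]`: all graphs obtained from `G` by swapping a set of
leaves (with pairwise distinct neighbors) with their neighbors. -/
def eqClass {d : ℕ} (G : SimpleGraph (Fin d)) : Set (SimpleGraph (Fin d)) :=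
  {H | ∃ e : Equiv.Perm (Fin d), IsLeafSwapPerm G e ∧ H = relabel G e}

/-- The number of leaf neighbors of a vertex `v`. -/
noncomputable def leafNbrCount {d : ℕ} (G : SimpleGraph (Fin d)) (v : Fin d) : ℕ :=
  {u | G.Adj v u ∧ IsLeaf G u}.ncard

section Aux

variable {d : ℕ} {G : SimpleGraph (Fin d)}

/-- In a connected graph on ≥ 3 vertices, two leaves are never adjacent. -/
lemma no_adj_leaves (hd : 3 ≤ d) (hc : G.Connected) {u v : Fin d}
    (h : G.Adj u v) (hu : IsLeaf G u) (hv : IsLeaf G v) : False := by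
  -- every walk from u stays in {u, v}
  have aux : ∀ {a b : Fin d} (_ : G.Walk a b), (a = u ∨ a = v) → (b = u ∨ b = v) := by
    intro a b w
    induction w with
    | nil => exact id
    | cons hadj p ih =>
      rename_i x y z
      intro hx
      apply ih
      rcases hx with rfl | rfl
      · obtain ⟨n, _, hn⟩ := hu
        have h1 := hn _ h
        have h2 := hn _ hadj
        right; rw [h2, h1]
      · obtain ⟨n, _, hn⟩ := hv
        have h1 := hn _ h.symm
        have h2 := hn _ hadj
        left; rw [h2, h1]
  -- find a third vertex
  have hcard : ({u, v} : Finset (Fin d)).card < d := by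
    calc ({u, v} : Finset (Fin d)).card ≤ 2 := by
          apply (Finset.card_insert_le _ _).trans; simp
      _ < 3 := by norm_num
      _ ≤ d := hd
  have hne : ({u, v} : Finset (Fin d)) ≠ Finset.univ := by
    intro hh
    rw [hh, Finset.card_univ, Fintype.card_fin] at hcard
    exact lt_irrefl _ hcard
  have hne' : ({u, v} : Set (Fin d)) ≠ Set.univ := by
    intro hh
    apply hne
    apply Finset.eq_univ_of_forall
    intro x
    have : x ∈ ({u, v} : Set (Fin d)) := hh ▸ Set.mem_univ x
    simpa using this
  obtain ⟨x, hx⟩ := (Set.ne_univ_iff_exists_notMem _).1 hne'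
  simp only [Set.mem_insert_iff, Set.mem_singleton_iff, not_or] at hx
  obtain ⟨w⟩ := hc.preconnected u x
  rcases aux w (Or.inl rfl) with rfl | rfl
  · exact hx.1 rfl
  · exact hx.2 rfl

end Aux

section Bij

variable {d : ℕ} (G : SimpleGraph (Fin d))

/-- Leaf neighbors of `v`, as a subtype. -/
abbrev LeafNbr (v : Fin d) := {u : Fin d // G.Adj v u ∧ IsLeaf G u}

open Classical in
/-- From a leaf-swap permutation, record at each vertex `v` the leaf
swapped with `v` (if any). -/
noncomputable def swapChoice (e : Equiv.Perm (Fin d)) (v : Fin d) : Option (LeafNbr G v) :=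
  if h : G.Adj v (e v) ∧ IsLeaf G (e v) then some ⟨e v, h⟩ else none

lemma swapChoice_some {e : Equiv.Perm (Fin d)} {v : Fin d} {u : LeafNbr G v}
    (h : swapChoice G e v = some u) : (u : Fin d) = e v := by
  unfold swapChoice at h
  split at h
  · cases h; rfl
  · cases h

lemma swapChoice_eq_some {e : Equiv.Perm (Fin d)} {v : Fin d}
    (h : G.Adj v (e v) ∧ IsLeaf G (e v)) : swapChoice G e v = some ⟨e v, h⟩ := by
  unfold swapChoice; rw [dif_pos h]

lemma swapChoice_eq_none {e : Equiv.Perm (Fin d)} {v : Fin d}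
    (h : ¬(G.Adj v (e v) ∧ IsLeaf G (e v))) : swapChoice G e v = none := by
  unfold swapChoice; rw [dif_neg h]

variable {G}
variable (hnal : ∀ {u v : Fin d}, G.Adj u v → IsLeaf G u → IsLeaf G v → False)

open Classical in
/-- The underlying function of the permutation reconstructed from a choice of
leaf neighbors. -/
noncomputable def swapFun (g : ∀ v : Fin d, Option (LeafNbr G v)) (v : Fin d) : Fin d :=
  if h : ∃ u, g v = some u then (h.choose : LeafNbr G v)
  else if h2 : ∃ w, ∃ u : LeafNbr G w, g w = some u ∧ (u : Fin d) = v then h2.choose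
  else v

variable {g : ∀ v : Fin d, Option (LeafNbr G v)}

/-- a leaf is the choice of at most one vertex -/
lemma uniq_source (w w' : Fin d) (u : LeafNbr G w) (u' : LeafNbr G w')
    (h : g w = some u) (h' : g w' = some u') (huv : (u : Fin d) = (u' : Fin d)) :
    w = w' := by
  obtain ⟨n, _, hn⟩ := u.2.2
  have h1 : w = n := hn _ u.2.1.symm
  have h2 : w' = n := hn _ (huv ▸ u'.2.1.symm)
  rw [h1, h2]

lemma swapFun_some {v : Fin d} {u : LeafNbr G v} (h : g v = some u) :
    swapFun g v = (u : Fin d) := by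
  unfold swapFun
  have he : ∃ u, g v = some u := ⟨u, h⟩
  rw [dif_pos he]
  exact congrArg Subtype.val (Option.some_inj.1 (he.choose_spec.symm.trans h))

lemma swapFun_target {v w : Fin d} {u : LeafNbr G w} (hv : g v = none)
    (h : g w = some u) (huv : (u : Fin d) = v) : swapFun g v = w := by
  unfold swapFun
  have he : ¬∃ u, g v = some u := by rintro ⟨u, hu⟩; rw [hv] at hu; cases hu
  rw [dif_neg he]
  have h2 : ∃ w, ∃ u : LeafNbr G w, g w = some u ∧ (u : Fin d) = v := ⟨w, u, h, huv⟩
  rw [dif_pos h2]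
  obtain ⟨u', hu', huv'⟩ := h2.choose_spec
  exact (uniq_source w h2.choose u u' h hu' (huv.trans huv'.symm)).symm

lemma swapFun_id {v : Fin d} (hv : g v = none)
    (h : ∀ (w : Fin d) (u : LeafNbr G w), g w = some u → (u : Fin d) ≠ v) :
    swapFun g v = v := by
  unfold swapFun
  have he : ¬∃ u, g v = some u := by rintro ⟨u, hu⟩; rw [hv] at hu; cases hu
  rw [dif_neg he]
  have h2 : ¬∃ w, ∃ u : LeafNbr G w, g w = some u ∧ (u : Fin d) = v := by
    rintro ⟨w, u, hu, huv⟩; exact h w u hu huv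
  rw [dif_neg h2]

include hnal in
lemma swapFun_involutive : Function.Involutive (swapFun g) := by
  intro v
  rcases hgv : g v with _ | u
  · rcases em (∃ w, ∃ u : LeafNbr G w, g w = some u ∧ (u : Fin d) = v) with ⟨w, u, hw, huv⟩ | h2
    · rw [swapFun_target hgv hw huv, swapFun_some hw, huv]
    · push_neg at h2
      rw [swapFun_id hgv h2, swapFun_id hgv h2]
  · rw [swapFun_some hgv]
    have hu_none : g (u : Fin d) = none := by
      rcases hgu : g (u : Fin d) with _ | u'
      · rfl
      · exact absurd u'.2.1 (fun hadj => (hnal hadj u.2.2 u'.2.2).elim)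
    exact swapFun_target hu_none hgv rfl

end Bij

section Equiv2

variable {d : ℕ} {G : SimpleGraph (Fin d)}
variable (hnal : ∀ {u v : Fin d}, G.Adj u v → IsLeaf G u → IsLeaf G v → False)

/-- The permutation reconstructed from a choice of leaf neighbors. -/
noncomputable def invPerm (g : ∀ v : Fin d, Option (LeafNbr G v)) : Equiv.Perm (Fin d) :=
  (swapFun_involutive (G := G) (g := g) hnal).toPerm

@[simp] lemma invPerm_apply (g : ∀ v : Fin d, Option (LeafNbr G v)) (v : Fin d) :
    invPerm hnal g v = swapFun g v := rfl

lemma invPerm_isLeafSwapPerm (g : ∀ v : Fin d, Option (LeafNbr G v)) :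
    IsLeafSwapPerm G (invPerm hnal g) := by
  constructor
  · intro v; exact swapFun_involutive hnal v
  · intro v hv
    simp only [invPerm_apply] at *
    rcases hgv : g v with _ | u
    · rcases em (∃ w, ∃ u : LeafNbr G w, g w = some u ∧ (u : Fin d) = v) with ⟨w, u, hw, huv⟩ | h2
      · left
        rw [swapFun_target hgv hw huv]
        subst huv
        exact ⟨u.2.2, u.2.1.symm⟩
      · push_neg at h2
        exact absurd (swapFun_id hgv h2) hv
    · right
      rw [swapFun_some hgv]
      exact ⟨u.2.2, u.2.1⟩

lemma left_inv {e : Equiv.Perm (Fin d)} (he : IsLeafSwapPerm G e) :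
    invPerm hnal (swapChoice G e) = e := by
  apply Equiv.ext
  intro v
  simp only [invPerm_apply]
  rcases em (G.Adj v (e v) ∧ IsLeaf G (e v)) with h | h
  · exact swapFun_some (swapChoice_eq_some G h)
  · have hnone : swapChoice G e v = none := swapChoice_eq_none G h
    rcases em (e v = v) with hfix | hmove
    · rw [hfix]
      apply swapFun_id hnone
      intro w u hu huv
      have hval := swapChoice_some G hu
      -- u = e w, and e w = v, so e v = w ≠ v
      have hw : G.Adj w (e w) ∧ IsLeaf G (e w) := by
        unfold swapChoice at hu
        split at hu
        · assumption
        · cases hu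
      have hev : e v = w := by rw [← huv, hval, he.1 w]
      have hne : e w ≠ w := hw.1.ne'
      have h1 : e w = v := by rw [← hval, huv]
      have hwv : w = v := (hfix.symm.trans hev).symm
      exact hne (h1.trans hwv.symm)
    · -- e v ≠ v, and ¬(Adj ∧ IsLeaf (e v)); from the swap property, IsLeaf v
      have hadj : G.Adj v (e v) := by
        rcases he.2 v hmove with ⟨_, h2⟩ | ⟨_, h2⟩ <;> exact h2
      have hlv : IsLeaf G v := by
        rcases he.2 v hmove with ⟨h1, _⟩ | ⟨h1, _⟩
        · exact h1
        · exact absurd ⟨hadj, h1⟩ h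
      -- swapChoice at (e v) is some ⟨v, _⟩
      have hcond : G.Adj (e v) (e (e v)) ∧ IsLeaf G (e (e v)) := by
        rw [he.1 v]; exact ⟨hadj.symm, hlv⟩
      have hsome := swapChoice_eq_some G hcond
      exact swapFun_target hnone hsome (he.1 v)

lemma right_inv (g : ∀ v : Fin d, Option (LeafNbr G v)) :
    swapChoice G (invPerm hnal g) = g := by
  funext v
  rcases hgv : g v with _ | u
  · rcases em (∃ w, ∃ u : LeafNbr G w, g w = some u ∧ (u : Fin d) = v) with ⟨w, u, hw, huv⟩ | h2
    · have hsf : swapFun g v = w := swapFun_target hgv hw huv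
      apply swapChoice_eq_none
      rintro ⟨hadj, hleaf⟩
      simp only [invPerm_apply, hsf] at hadj hleaf
      -- v is a leaf (it is u), w is adjacent to it, and w would be a leaf: contradiction
      have hlv : IsLeaf G v := huv ▸ u.2.2
      exact hnal hadj hlv hleaf
    · push_neg at h2
      have hsf : swapFun g v = v := swapFun_id hgv h2
      apply swapChoice_eq_none
      rintro ⟨hadj, -⟩
      simp only [invPerm_apply, hsf] at hadj
      exact G.irrefl hadj
  · have hsf : swapFun g v = (u : Fin d) := swapFun_some hgv
    have hcond : G.Adj v (invPerm hnal g v) ∧ IsLeaf G (invPerm hnal g v) := by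
      simp only [invPerm_apply, hsf]
      exact ⟨u.2.1, u.2.2⟩
    rw [swapChoice_eq_some G hcond]
    congr 1
    apply Subtype.ext
    simpa using hsf

/-- The main bijection. -/
noncomputable def swapEquiv : {e : Equiv.Perm (Fin d) // IsLeafSwapPerm G e} ≃
    (∀ v : Fin d, Option (LeafNbr G v)) where
  toFun e := swapChoice G e.1
  invFun g := ⟨invPerm hnal g, invPerm_isLeafSwapPerm hnal g⟩
  left_inv e := Subtype.ext (left_inv hnal e.2)
  right_inv g := right_inv hnal g

end Equiv2

section Inj

variable {d : ℕ} {G : SimpleGraph (Fin d)}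

lemma relabel_adj {e : Equiv.Perm (Fin d)} (he : ∀ v, e (e v) = v) (a b : Fin d) :
    (relabel G e).Adj a b ↔ G.Adj (e a) (e b) := by
  unfold relabel
  rw [SimpleGraph.map_adj]
  constructor
  · rintro ⟨x, y, hxy, rfl, rfl⟩
    simpa only [Equiv.toEmbedding_apply, he] using hxy
  · intro h
    exact ⟨e a, e b, h, he a, he b⟩

/-- A bijection preserving adjacency preserves the leaf property. -/
lemma leaf_map {σ : Equiv.Perm (Fin d)} (hσ : ∀ x y, G.Adj x y ↔ G.Adj (σ x) (σ y))
    {v : Fin d} (hv : IsLeaf G v) : IsLeaf G (σ v) := by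
  obtain ⟨w, hw, hu⟩ := hv
  refine ⟨σ w, (hσ v w).1 hw, ?_⟩
  intro y hy
  have : G.Adj v (σ.symm y) := by
    rw [hσ v (σ.symm y), Equiv.apply_symm_apply]
    exact hy
  have := hu _ this
  rw [← this, Equiv.apply_symm_apply]

lemma leaf_iff_map {σ : Equiv.Perm (Fin d)} (hσ : ∀ x y, G.Adj x y ↔ G.Adj (σ x) (σ y))
    (v : Fin d) : IsLeaf G v ↔ IsLeaf G (σ v) := by
  constructor
  · exact leaf_map hσ
  · intro h
    have hσ' : ∀ x y, G.Adj x y ↔ G.Adj (σ.symm x) (σ.symm y) := by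
      intro x y
      conv_lhs => rw [← Equiv.apply_symm_apply σ x, ← Equiv.apply_symm_apply σ y]
      exact (hσ _ _).symm
    have := leaf_map hσ' h
    rwa [Equiv.symm_apply_apply] at this

lemma relabel_injOn (hnal : ∀ {u v : Fin d}, G.Adj u v → IsLeaf G u → IsLeaf G v → False)
    {e e' : Equiv.Perm (Fin d)} (he : IsLeafSwapPerm G e) (he' : IsLeafSwapPerm G e')
    (hrel : relabel G e = relabel G e') : e = e' := by
  have hadj : ∀ a b, G.Adj (e a) (e b) ↔ G.Adj (e' a) (e' b) := by
    intro a b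
    rw [← relabel_adj he.1, ← relabel_adj he'.1, hrel]
  set σ : Equiv.Perm (Fin d) := e.trans e' with hσdef
  have hσ : ∀ x y, G.Adj x y ↔ G.Adj (σ x) (σ y) := by
    intro x y
    have := hadj (e x) (e y)
    simpa only [he.1, hσdef, Equiv.trans_apply] using this
  have hleaf := leaf_iff_map hσ
  -- σ fixes every vertex
  have hfix : ∀ v, σ v = v := by
    intro v
    rcases em (IsLeaf G v) with hlv | hlv
    · -- v is a leaf with unique (non-leaf) neighbor n
      obtain ⟨n, hn, hun⟩ := hlv
      have hlv : IsLeaf G v := ⟨n, hn, hun⟩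
      have hnl : ¬ IsLeaf G n := fun h => hnal hn hlv h
      have hσv : IsLeaf G (σ v) := (hleaf v).1 hlv
      rcases em (e v = v) with h1 | h1
      · -- σ v = e' v
        have hs : σ v = e' v := by simp [hσdef, Equiv.trans_apply, h1]
        rcases em (e' v = v) with h2 | h2
        · rw [hs, h2]
        · -- e' v is adjacent to v hence = n; but σ v is leaf, n is not
          have hadj2 : G.Adj v (e' v) := by
            rcases he'.2 v h2 with ⟨_, hh⟩ | ⟨_, hh⟩ <;> exact hh
          have : e' v = n := hun _ hadj2
          rw [hs, this] at hσv
          exact absurd hσv hnl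
      · -- e v = n
        have hadj1 : G.Adj v (e v) := by
          rcases he.2 v h1 with ⟨_, hh⟩ | ⟨_, hh⟩ <;> exact hh
        have hev : e v = n := hun _ hadj1
        have hs : σ v = e' n := by simp [hσdef, Equiv.trans_apply, hev]
        rcases em (e' n = n) with h2 | h2
        · rw [hs, h2] at hσv
          exact absurd hσv hnl
        · -- e' n = w, a leaf adjacent to n; must be v
          have hw : IsLeaf G (e' n) ∧ G.Adj n (e' n) := by
            rcases he'.2 n h2 with ⟨hh, hh2⟩ | hh
            · exact absurd hh hnl
            · exact hh
          by_cases h3 : e' n = v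
          · rw [hs, h3]
          · -- w := e' n ≠ v : derive a contradiction by looking at σ w
            exfalso
            set w := e' n with hwdef
            -- e w = w : else e w would be the unique nbr n of leaf w, but e n = v
            have hlw : IsLeaf G w := hw.1
            obtain ⟨m, hm, hum⟩ := hlw
            have hmn : m = n := (hum _ hw.2.symm).symm
            have hew : e w = w := by
              by_contra h4
              have : G.Adj w (e w) := by
                rcases he.2 w h4 with ⟨_, hh⟩ | ⟨_, hh⟩ <;> exact hh
              have hewn : e w = n := hmn ▸ hum _ this
              have h7 : e n = w := by rw [← hewn, he.1]
              have h8 : e n = v := by rw [← hev, he.1]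
              exact h3 (h7.symm.trans h8)
            have hσw : σ w = n := by
              have h9 : e' w = n := he'.1 n
              simp [hσdef, Equiv.trans_apply, hew, h9]
            have : IsLeaf G n := by
              have := (hleaf w).1 hw.1
              rwa [hσw] at this
            exact hnl this
    · -- v is not a leaf
      have hσv : ¬ IsLeaf G (σ v) := fun h => hlv ((hleaf v).2 h)
      rcases em (e v = v) with h1 | h1
      · have hs : σ v = e' v := by simp [hσdef, Equiv.trans_apply, h1]
        rcases em (e' v = v) with h2 | h2
        · rw [hs, h2]
        · have : IsLeaf G (e' v) := by
            rcases he'.2 v h2 with ⟨hh, _⟩ | ⟨hh, _⟩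
            · exact absurd hh hlv
            · exact hh
          rw [hs] at hσv
          exact absurd this hσv
      · -- e v = u, a leaf adjacent to v
        have hu : IsLeaf G (e v) ∧ G.Adj v (e v) := by
          rcases he.2 v h1 with ⟨hh, hh2⟩ | hh
          · exact absurd hh hlv
          · exact hh
        set u := e v with hudef
        have hs : σ v = e' u := by simp [hσdef, Equiv.trans_apply, hudef]
        rcases em (e' u = u) with h2 | h2
        · rw [hs, h2] at hσv
          exact absurd hu.1 hσv
        · -- e' u is the unique neighbor of leaf u, namely v
          have hadj2 : G.Adj u (e' u) := by
            rcases he'.2 u h2 with ⟨_, hh⟩ | ⟨_, hh⟩ <;> exact hh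
          obtain ⟨m, hm, hum⟩ := hu.1
          have h5 : e' u = m := hum _ hadj2
          have h6 : v = m := hum _ hu.2.symm
          rw [hs, h5, ← h6]
  -- conclude e = e'
  apply Equiv.ext
  intro y
  have := hfix (e y)
  simp only [hσdef, Equiv.trans_apply, he.1] at this
  exact this.symm

end Inj

/-- for a tree on `d ≥ 4` nodes, `|[T]| = ∏ᵢ (1 + ℓᵢ)` where the `ℓᵢ`
are the sizes of the groups of leaves sharing a common neighbor.  (Vertices with
no leaf neighbor contribute a factor `1 + 0 = 1`.) -/
theorem card_eqClass (d : ℕ) (hd : 4 ≤ d) (G : SimpleGraph (Fin d)) (hG : G.IsTree) :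
    (eqClass G).ncard = ∏ v : Fin d, (1 + leafNbrCount G v) := by
  have hnal : ∀ {u v : Fin d}, G.Adj u v → IsLeaf G u → IsLeaf G v → False := by
    intro u v h hu hv
    exact no_adj_leaves (by omega) hG.isConnected h hu hv
  have himg : eqClass G = (fun e => relabel G e) '' {e | IsLeafSwapPerm G e} := by
    ext H
    simp only [eqClass, Set.mem_setOf_eq, Set.mem_image]
    constructor
    · rintro ⟨e, h1, h2⟩; exact ⟨e, h1, h2.symm⟩
    · rintro ⟨e, h1, h2⟩; exact ⟨e, h1, h2.symm⟩
  rw [himg, Set.ncard_image_of_injOn (s := {e | IsLeafSwapPerm G e})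
      (fun e he e' he' h => relabel_injOn hnal he he' h)]
  rw [← Nat.card_coe_set_eq]
  have : Nat.card ↑{e | IsLeafSwapPerm G e} = Nat.card (∀ v : Fin d, Option (LeafNbr G v)) :=
    Nat.card_congr ((Equiv.setCongr rfl).trans (swapEquiv hnal))
  rw [this, Nat.card_pi]
  apply Finset.prod_congr rfl
  intro v _
  rw [Finite.card_option, add_comm]
  congr 1
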